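/- There is a constant B > 0 such that for any degree-1 multilinear polynomial P(x) over the reals with at least r variables having non-zero coefficients, Pr over uniform x ∈ {0,1}^n that P(x) = 0 is at most B/√r. -/

import Mathlib

open Finset

/-- `centralBinom k ^ 2 * (3k+1) ≤ 16^k`. -/
lemma aux_cb_sq (k : ℕ) : ((Nat.centralBinom k : ℝ))^2 * (3*k+1) ≤ 16^k := by
  induction k with
  | zero => simp [Nat.centralBinom]
  | succ k ih =>
    have key : ((k:ℝ)+1) * Nat.centralBinom (k+1) = 2*(2*k+1) * Nat.centralBinom k := by
      exact_mod_cast congrArg (Nat.cast : ℕ → ℝ) (Nat.succ_mul_centralBinom_succ k)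
    have hk1 : (0:ℝ) < (k:ℝ)+1 := by positivity
    have hcb : (0:ℝ) ≤ (Nat.centralBinom k : ℝ) := by positivity
    have h16 : (0:ℝ) < 16^k := by positivity
    have sq : ((k:ℝ)+1)^2 * (Nat.centralBinom (k+1):ℝ)^2
        = (2*(2*k+1))^2 * (Nat.centralBinom k:ℝ)^2 := by
      have := congrArg (fun t : ℝ => t^2) key
      simp only [mul_pow] at this ⊢
      linarith [this]
    have poly : (2*((2:ℝ)*k+1))^2 * (3*(k+1)+1) ≤ 16 * ((k:ℝ)+1)^2 * (3*k+1) := by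
      nlinarith [sq_nonneg ((k:ℝ))]
    -- goal: cb(k+1)^2 * (3(k+1)+1) ≤ 16^(k+1)
    have h1 : ((k:ℝ)+1)^2 * ((Nat.centralBinom (k+1):ℝ)^2 * (3*(k+1)+1))
        ≤ ((k:ℝ)+1)^2 * 16^(k+1) := by
      calc ((k:ℝ)+1)^2 * ((Nat.centralBinom (k+1):ℝ)^2 * (3*(k+1)+1))
          = (2*(2*k+1))^2 * (Nat.centralBinom k:ℝ)^2 * (3*(k+1)+1) := by rw [← mul_assoc, sq]
        _ ≤ 16 * ((k:ℝ)+1)^2 * (3*k+1) * (Nat.centralBinom k:ℝ)^2 := by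
            nlinarith [sq_nonneg ((Nat.centralBinom k:ℝ)), poly, sq_nonneg ((k:ℝ))]
        _ ≤ 16 * ((k:ℝ)+1)^2 * 16^k := by nlinarith [ih, sq_nonneg ((k:ℝ)+1)]
        _ = ((k:ℝ)+1)^2 * 16^(k+1) := by ring
    have := le_of_mul_le_mul_left (by calc ((k:ℝ)+1)^2 * ((Nat.centralBinom (k+1):ℝ)^2 * (3*(k+1)+1)) ≤ ((k:ℝ)+1)^2 * 16^(k+1) := h1) (by positivity : (0:ℝ) < ((k:ℝ)+1)^2)
    push_cast
    push_cast at this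
    linarith

lemma aux_cb_sqrt (j t : ℕ) (h : t ≤ 3*j+1) :
    (Nat.centralBinom j : ℝ) * Real.sqrt t ≤ 4^j := by
  have h1 : ((Nat.centralBinom j : ℝ))^2 * t ≤ 16^j := by
    refine le_trans ?_ (aux_cb_sq j)
    have : (t:ℝ) ≤ 3*j+1 := by exact_mod_cast h
    nlinarith [sq_nonneg ((Nat.centralBinom j : ℝ))]
  have e1 : (Nat.centralBinom j : ℝ) * Real.sqrt t
      = Real.sqrt (((Nat.centralBinom j : ℝ))^2 * t) := by
    rw [Real.sqrt_mul (by positivity), Real.sqrt_sq (by positivity)]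
  rw [e1]
  calc Real.sqrt (((Nat.centralBinom j : ℝ))^2 * t) ≤ Real.sqrt (16^j) :=
        Real.sqrt_le_sqrt h1
    _ = 4^j := by
        rw [show (16:ℝ) = (4:ℝ)^2 by norm_num, ← pow_mul, mul_comm, pow_mul,
          Real.sqrt_sq (by positivity)]

/-- `choose m (m/2) * √m ≤ 2^m`. -/
lemma aux_choose_sqrt (m : ℕ) : (m.choose (m/2) : ℝ) * Real.sqrt m ≤ 2^m := by
  rcases Nat.even_or_odd m with ⟨k, hk⟩ | ⟨k, hk⟩
  · subst hk
    have hd : (k + k) / 2 = k := by omega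
    have hc : (k+k).choose k = Nat.centralBinom k := by
      rw [Nat.centralBinom]; congr 1; omega
    rw [hd, hc]
    have hb := aux_cb_sqrt k (k+k) (by omega)
    have h4 : (4:ℝ)^k = 2^(k+k) := by
      rw [show (4:ℝ) = 2^2 by norm_num, ← pow_mul, two_mul]
    exact hb.trans_eq h4
  · subst hk
    have hd : (2*k + 1) / 2 = k := by omega
    have hc : 2 * ((2*k+1).choose k) = Nat.centralBinom (k+1) := by
      have hs : (2*k+1).choose (k+1) = (2*k+1).choose k := by
        have := Nat.choose_symm (show k+1 ≤ 2*k+1 by omega)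
        simpa [show 2*k+1-(k+1) = k by omega] using this.symm
      have hp : (2*k+2).choose (k+1) = (2*k+1).choose k + (2*k+1).choose (k+1) := by
        rw [show 2*k+2 = (2*k+1)+1 by ring]
        exact Nat.choose_succ_succ (2*k+1) k
      rw [Nat.centralBinom, show 2*(k+1) = 2*k+2 by ring, hp, hs]; ring
    rw [hd]
    have hb := aux_cb_sqrt (k+1) (2*k+1) (by omega)
    have hcast : (Nat.centralBinom (k+1) : ℝ) = 2 * ((2*k+1).choose k : ℝ) := by
      exact_mod_cast (congrArg (Nat.cast : ℕ → ℝ) hc).symm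
    rw [hcast] at hb
    have h4 : (4:ℝ)^(k+1) = 2 * 2^(2*k+1) := by
      rw [show (4:ℝ) = 2^2 by norm_num, ← pow_mul]; ring
    push_cast at hb ⊢
    nlinarith [hb, h4]

lemma aux_count (n : ℕ) (c0 : ℝ) (c : Fin n → ℝ) :
    (Finset.univ.filter (fun x : Fin n → Bool =>
        c0 + ∑ i, c i * (if x i then 1 else 0) = 0)).card
      ≤ ((Finset.univ.filter (fun i => c i ≠ 0)).card.choose
            ((Finset.univ.filter (fun i => c i ≠ 0)).card / 2))
          * 2 ^ (n - (Finset.univ.filter (fun i => c i ≠ 0)).card) := by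
  classical
  set sol := Finset.univ.filter (fun x : Fin n → Bool =>
      c0 + ∑ i, c i * (if x i then 1 else 0) = 0) with hsol
  set D := Finset.univ.filter (fun i : Fin n => c i ≠ 0) with hD
  let cond : (Fin n → Bool) → Fin n → Prop :=
    fun x i => if 0 < c i then x i = true else x i = false
  let T : (Fin n → Bool) → Finset {i : Fin n // c i ≠ 0} :=
    fun x => Finset.univ.filter (fun i => cond x i.1)
  set K : ℝ := -c0 - ∑ i : Fin n, (if c i < 0 then c i else 0) with hK
  -- key sum identity
  have key : ∀ x ∈ sol, (∑ i ∈ T x, |c (i : {i : Fin n // c i ≠ 0}).1|) = K := by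
    intro x hx
    rw [hsol, Finset.mem_filter] at hx
    have hx' := hx.2
    have hterm : ∀ i : Fin n, c i * (if x i then 1 else 0)
        = (if c i < 0 then c i else 0)
          + (if c i ≠ 0 ∧ cond x i then |c i| else 0) := by
      intro i
      rcases lt_trichotomy (c i) 0 with h | h | h
      · by_cases hxi : x i = true <;>
          simp [cond, hxi, h, h.ne, not_lt_of_gt h, abs_of_neg h]
      · simp [cond, h]
      · by_cases hxi : x i = true <;>
          simp [cond, hxi, h, h.ne', abs_of_pos h, not_lt.2 h.le]
    have hsum : ∑ i : Fin n, c i * (if x i then 1 else 0)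
        = (∑ i : Fin n, (if c i < 0 then c i else 0))
          + ∑ i : Fin n, (if c i ≠ 0 ∧ cond x i then |c i| else 0) := by
      rw [← Finset.sum_add_distrib]
      exact Finset.sum_congr rfl (fun i _ => hterm i)
    have hsub : ∑ i : Fin n, (if c i ≠ 0 ∧ cond x i then |c i| else 0)
        = ∑ i ∈ D, (if c i ≠ 0 ∧ cond x i then |c i| else 0) := by
      refine (Finset.sum_subset (Finset.subset_univ D) ?_).symm
      intro i _ hiD
      rw [hD, Finset.mem_filter] at hiD
      simp only [Finset.mem_univ, true_and] at hiD
      rw [not_not] at hiD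
      simp [hiD]
    have hsubt : ∑ i ∈ D, (if c i ≠ 0 ∧ cond x i then |c i| else 0)
        = ∑ i : {i : Fin n // c i ≠ 0}, (if c i.1 ≠ 0 ∧ cond x i.1 then |c i.1| else 0) := by
      refine Finset.sum_subtype D ?_ _
      intro i; rw [hD]; simp
    have hT : ∑ i : {i : Fin n // c i ≠ 0}, (if c i.1 ≠ 0 ∧ cond x i.1 then |c i.1| else 0)
        = ∑ i ∈ T x, |c (i : {i : Fin n // c i ≠ 0}).1| := by
      rw [Finset.sum_filter]
      refine Finset.sum_congr rfl (fun i _ => ?_)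
      simp [i.2]
    rw [← hT, ← hsubt, ← hsub, hK]
    linarith [hx', hsum]
  -- injectivity
  let F : (Fin n → Bool) → Finset {i : Fin n // c i ≠ 0} × ({i : Fin n // c i = 0} → Bool) :=
    fun x => (T x, fun i => x i.1)
  have hinj : Function.Injective F := by
    intro x y hxy
    have h1 : T x = T y := congrArg Prod.fst hxy
    have h2 : (fun i : {i : Fin n // c i = 0} => x i.1)
        = (fun i : {i : Fin n // c i = 0} => y i.1) := congrArg Prod.snd hxy
    funext i
    by_cases hci : c i ≠ 0
    · have := Finset.ext_iff.1 h1 ⟨i, hci⟩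
      simp only [T, Finset.mem_filter, Finset.mem_univ, true_and, cond] at this
      by_cases hpos : 0 < c i
      · simp only [hpos, if_pos] at this
        cases hx : x i <;> cases hy : y i <;> simp_all
      · simp only [hpos, if_neg, if_false] at this
        cases hx : x i <;> cases hy : y i <;> simp_all
    · rw [not_not] at hci
      exact congrFun h2 ⟨i, hci⟩
  set 𝒜 := sol.image T with hA
  -- card bound via product
  have hcard1 : sol.card ≤ 𝒜.card * 2 ^ (n - D.card) := by
    have himg : sol.image F ⊆ 𝒜 ×ˢ (Finset.univ : Finset ({i : Fin n // c i = 0} → Bool)) := by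
      intro p hp
      rw [Finset.mem_image] at hp
      obtain ⟨x, hx, rfl⟩ := hp
      rw [Finset.mem_product]
      exact ⟨Finset.mem_image_of_mem _ hx, Finset.mem_univ _⟩
    have := Finset.card_le_card himg
    rw [Finset.card_image_of_injective _ hinj, Finset.card_product, Finset.card_univ,
      Fintype.card_fun, Fintype.card_bool] at this
    have hcz : Fintype.card {i : Fin n // c i = 0} = n - D.card := by
      rw [Fintype.card_subtype]
      have := Finset.card_filter_add_card_filter_not
        (s := (Finset.univ : Finset (Fin n))) (p := fun i => c i = 0)
      simp only [Finset.card_univ, Fintype.card_fin] at this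
      have hDd : (Finset.univ.filter (fun i : Fin n => ¬ c i = 0)).card = D.card := by
        rw [hD]
      omega
    rw [hcz] at this
    exact this
  -- antichain
  have hanti : IsAntichain (· ⊆ ·) (𝒜 : Set (Finset {i : Fin n // c i ≠ 0})) := by
    intro a ha b hb hne hsub
    rw [Finset.mem_coe, hA, Finset.mem_image] at ha hb
    obtain ⟨x, hx, rfl⟩ := ha
    obtain ⟨y, hy, rfl⟩ := hb
    have hxy : (∑ i ∈ T x, |c (i : {i : Fin n // c i ≠ 0}).1|)
        = ∑ i ∈ T y, |c (i : {i : Fin n // c i ≠ 0}).1| := by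
      rw [key x hx, key y hy]
    have hdiff := Finset.sum_sdiff (f := fun i : {i : Fin n // c i ≠ 0} => |c i.1|) hsub
    have hzero : (∑ i ∈ T y \ T x, |c (i : {i : Fin n // c i ≠ 0}).1|) = 0 := by
      linarith
    have hempty : T y \ T x = ∅ := by
      by_contra hne'
      obtain ⟨i, hi⟩ := Finset.nonempty_iff_ne_empty.2 hne'
      have hpos : 0 < |c i.1| := abs_pos.2 i.2
      have hnn : ∀ j ∈ T y \ T x, (0:ℝ) ≤ |c (j : {i : Fin n // c i ≠ 0}).1| :=
        fun j _ => abs_nonneg _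
      have := (Finset.sum_eq_zero_iff_of_nonneg hnn).1 hzero i hi
      linarith
    exact hne (Finset.Subset.antisymm hsub (Finset.sdiff_eq_empty_iff_subset.1 hempty))
  have hsperner := IsAntichain.sperner hanti
  have hcardα : Fintype.card {i : Fin n // c i ≠ 0} = D.card := by
    rw [Fintype.card_subtype, hD]
  rw [hcardα] at hsperner
  calc sol.card ≤ 𝒜.card * 2 ^ (n - D.card) := hcard1
    _ ≤ D.card.choose (D.card / 2) * 2 ^ (n - D.card) :=
        Nat.mul_le_mul_right _ hsperner

/-- Erdős's strengthening of the Littlewood–Offord theorem on the Boolean cube: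
there is a constant `B > 0` such that any real degree-1 multilinear polynomial with
at least `r ≥ 1` non-zero coefficients vanishes on at most a `B/√r` fraction of
`{0,1}ⁿ`. -/
theorem stmt14 :
    ∃ B : ℝ, 0 < B ∧
      ∀ (n r : ℕ) (c0 : ℝ) (c : Fin n → ℝ),
        0 < r →
        r ≤ (Finset.univ.filter (fun i => c i ≠ 0)).card →
        ((Finset.univ.filter (fun x : Fin n → Bool =>
            c0 + ∑ i, c i * (if x i then 1 else 0) = 0)).card : ℝ)
          ≤ B / Real.sqrt r * 2 ^ n := by
  refine ⟨1, one_pos, ?_⟩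
  intro n r c0 c hr hrle
  set m := (Finset.univ.filter (fun i => c i ≠ 0)).card with hm
  have hmn : m ≤ n := by
    rw [hm]
    calc (Finset.univ.filter (fun i => c i ≠ 0)).card
        ≤ (Finset.univ : Finset (Fin n)).card := Finset.card_filter_le _ _
      _ = n := by simp
  have hm1 : 1 ≤ m := le_trans hr hrle
  have hcount := aux_count n c0 c
  rw [← hm] at hcount
  have hcast : ((Finset.univ.filter (fun x : Fin n → Bool =>
      c0 + ∑ i, c i * (if x i then 1 else 0) = 0)).card : ℝ)
      ≤ (m.choose (m/2) : ℝ) * 2 ^ (n - m) := by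
    have : ((Finset.univ.filter (fun x : Fin n → Bool =>
        c0 + ∑ i, c i * (if x i then 1 else 0) = 0)).card : ℝ)
        ≤ ((m.choose (m/2) * 2 ^ (n - m) : ℕ) : ℝ) := Nat.cast_le.2 hcount
    push_cast at this
    exact this
  have hsqm : (0:ℝ) < Real.sqrt m := Real.sqrt_pos.2 (by exact_mod_cast hm1)
  have hsqr : (0:ℝ) < Real.sqrt r := Real.sqrt_pos.2 (by exact_mod_cast hr)
  have hsqrm : Real.sqrt r ≤ Real.sqrt m := Real.sqrt_le_sqrt (by exact_mod_cast hrle)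
  have hchoose : (m.choose (m/2) : ℝ) ≤ 2^m / Real.sqrt m := by
    rw [le_div_iff₀ hsqm]
    exact aux_choose_sqrt m
  have hpow : (2:ℝ)^m * 2^(n-m) = 2^n := by
    rw [← pow_add, Nat.add_sub_cancel' hmn]
  calc ((Finset.univ.filter (fun x : Fin n → Bool =>
        c0 + ∑ i, c i * (if x i then 1 else 0) = 0)).card : ℝ)
      ≤ (m.choose (m/2) : ℝ) * 2 ^ (n - m) := hcast
    _ ≤ (2^m / Real.sqrt m) * 2 ^ (n - m) :=
        mul_le_mul_of_nonneg_right hchoose (by positivity)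
    _ = 2^n / Real.sqrt m := by rw [div_mul_eq_mul_div, hpow]
    _ ≤ 2^n / Real.sqrt r := by
        apply div_le_div_of_nonneg_left (by positivity) hsqr hsqrm
    _ = 1 / Real.sqrt r * 2^n := by ring
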